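/- Let G be a graph with no subgraph isomorphic to a q-ary tree of height h (q ≥ 2, h ≥ 2), let k = 2q^h, and let A be the set of vertices of G of degree less than k. Then the induced subgraph G − A contains no subgraph isomorphic to a q-ary tree of height h − 1. -/

import Mathlib

/-- The vertices of the complete `q`-ary tree of height `h`: sequences of branching choices
of length at most `h` (the root is the empty sequence, depth = length). -/
def qaryVert (q h : ℕ) := {l : List (Fin q) // l.length ≤ h}

/-- The complete `q`-ary tree of height `h`: every vertex at depth less than `h` has exactly
`q` children, obtained by prepending a branching choice. -/
def qaryTree (q h : ℕ) : SimpleGraph (qaryVert q h) :=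
  SimpleGraph.fromRel (fun a b => ∃ i : Fin q, b.val = i :: a.val)

/-- `G` contains a subgraph isomorphic to the `q`-ary tree of height `h`. -/
def ContainsQaryTree {V : Type*} (G : SimpleGraph V) (q h : ℕ) : Prop :=
  ∃ f : qaryVert q h → V, Function.Injective f ∧
    ∀ a b, (qaryTree q h).Adj a b → G.Adj (f a) (f b)

open List (Vector)

/-- `qaryVert q n` is equivalent to a sigma of vectors, one summand per depth. -/
def qaryVertEquiv (q n : ℕ) : qaryVert q n ≃ Σ j : Fin (n + 1), List.Vector (Fin q) j where
  toFun a := ⟨⟨a.val.length, Nat.lt_succ_of_le a.prop⟩, ⟨a.val, rfl⟩⟩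
  invFun s := ⟨s.2.val, by have h1 := s.2.prop; have h2 := s.1.isLt; omega⟩
  left_inv a := rfl
  right_inv s := by
    rcases s with ⟨⟨j, hj⟩, l, hl⟩
    simp only [Fin.val_mk] at hl
    subst hl
    rfl

noncomputable instance (q n : ℕ) : Fintype (qaryVert q n) :=
  Fintype.ofEquiv _ (qaryVertEquiv q n).symm

lemma card_qaryVert (q n : ℕ) :
    Fintype.card (qaryVert q n) = ∑ j ∈ Finset.range (n + 1), q ^ j := by
  rw [Fintype.card_congr (qaryVertEquiv q n), Fintype.card_sigma]
  simp [Fin.sum_univ_eq_sum_range]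

lemma qary_geom_le (q : ℕ) (hq : 2 ≤ q) :
    ∀ n, ∑ j ∈ Finset.range (n + 1), q ^ j ≤ q ^ (n + 1)
  | 0 => by simp; omega
  | n + 1 => by
    rw [Finset.sum_range_succ, pow_succ (a := q) (n := n + 1)]
    have := qary_geom_le q hq n
    nlinarith [pow_pos (show 0 < q by omega) (n + 1)]

theorem stmt10 {V : Type*} [Fintype V] (G : SimpleGraph V) (q h : ℕ)
    (hq : 2 ≤ q) (hh : 2 ≤ h) (hG : ¬ ContainsQaryTree G q h) :
    ¬ ContainsQaryTree (G.induce {v : V | Set.ncard {w | G.Adj v w} < 2 * q ^ h}ᶜ)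
      q (h - 1) := by
  classical
  rintro ⟨f0, hf0i, hf0a⟩
  set f : qaryVert q (h - 1) → V := fun a => (f0 a).val with hfdef
  have hfi : Function.Injective f := fun a b e => hf0i (Subtype.ext e)
  have hdeg : ∀ a, 2 * q ^ h ≤ G.degree (f a) := by
    intro a
    have hmem := (f0 a).prop
    simp only [Set.mem_compl_iff, Set.mem_setOf_eq, not_lt] at hmem
    have hns : Set.ncard {w | G.Adj (f a) w} = G.degree (f a) := by
      rw [show {w | G.Adj (f a) w} = G.neighborSet (f a) from rfl,
        ← SimpleGraph.card_neighborSet_eq_degree, ← Nat.card_eq_fintype_card,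
        Nat.card_coe_set_eq]
    rwa [hns] at hmem
  set R : Finset V := Finset.univ.image f with hRdef
  have hR : R.card ≤ q ^ h := by
    rw [hRdef, Finset.card_image_of_injective _ hfi, Finset.card_univ, card_qaryVert]
    have h2 := qary_geom_le q hq (h - 1)
    have hh1 : h - 1 + 1 = h := by omega
    rw [hh1] at h2
    rw [hh1]
    exact h2
  set t : List.Vector (Fin q) (h - 1) × Fin q → Finset V :=
    fun p => G.neighborFinset (f ⟨p.1.val, le_of_eq p.1.prop⟩) \ R with htdef
  have hcard_t : ∀ p, q ^ h ≤ (t p).card := by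
    intro p
    show q ^ h ≤ (G.neighborFinset (f ⟨p.1.val, le_of_eq p.1.prop⟩) \ R).card
    have h1 := Finset.le_card_sdiff R (G.neighborFinset (f ⟨p.1.val, le_of_eq p.1.prop⟩))
    have h2 := hdeg ⟨p.1.val, le_of_eq p.1.prop⟩
    rw [SimpleGraph.card_neighborFinset_eq_degree] at h1
    omega
  have hcard_ι : Fintype.card (List.Vector (Fin q) (h - 1) × Fin q) = q ^ h := by
    rw [Fintype.card_prod, card_vector, Fintype.card_fin, ← pow_succ]
    congr 1
    omega
  have hall : ∀ s : Finset (List.Vector (Fin q) (h - 1) × Fin q), s.card ≤ (s.biUnion t).card := by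
    intro s
    rcases s.eq_empty_or_nonempty with rfl | ⟨p, hp⟩
    · simp
    · calc s.card ≤ Fintype.card (List.Vector (Fin q) (h - 1) × Fin q) := by
            rw [← Finset.card_univ]; exact Finset.card_le_card (Finset.subset_univ s)
        _ = q ^ h := hcard_ι
        _ ≤ (t p).card := hcard_t p
        _ ≤ (s.biUnion t).card :=
            Finset.card_le_card (Finset.subset_biUnion_of_mem t hp)
  obtain ⟨c, hci, hct⟩ := (Finset.all_card_le_biUnion_card_iff_exists_injective t).mp hall
  have hcn : ∀ p, G.Adj (f ⟨p.1.val, le_of_eq p.1.prop⟩) (c p) := by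
    intro p
    have h0 : c p ∈ G.neighborFinset (f ⟨p.1.val, le_of_eq p.1.prop⟩) \ R := hct p
    rw [Finset.mem_sdiff, SimpleGraph.mem_neighborFinset] at h0
    exact h0.1
  have hcR : ∀ p, c p ∉ R := by
    intro p
    have h0 : c p ∈ G.neighborFinset (f ⟨p.1.val, le_of_eq p.1.prop⟩) \ R := hct p
    rw [Finset.mem_sdiff] at h0
    exact h0.2
  set g : qaryVert q h → V := fun a =>
    if hl : a.val.length ≤ h - 1 then f ⟨a.val, hl⟩
    else c (⟨a.val.tail, by have := a.prop; simp only [List.length_tail]; omega⟩,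
            a.val.head (fun e => hl (by rw [e]; exact Nat.zero_le _))) with hgdef
  have hgshort : ∀ (a : qaryVert q h) (hl : a.val.length ≤ h - 1), g a = f ⟨a.val, hl⟩ := by
    intro a hl
    exact dif_pos hl
  apply hG
  refine ⟨g, ?_, ?_⟩
  · intro a b e
    rw [hgdef] at e
    dsimp only at e
    split_ifs at e with ha hb hb
    · have h4 : (⟨a.val, ha⟩ : qaryVert q (h - 1)) = ⟨b.val, hb⟩ := hfi e
      have h5 : a.val = b.val := congrArg (fun x : qaryVert q (h - 1) => x.val) h4
      exact Subtype.ext h5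
    · have hmem : f ⟨a.val, ha⟩ ∈ R := Finset.mem_image_of_mem f (Finset.mem_univ _)
      exact absurd (e ▸ hmem) (hcR _)
    · have hmem : f ⟨b.val, hb⟩ ∈ R := Finset.mem_image_of_mem f (Finset.mem_univ _)
      exact absurd (e.symm ▸ hmem) (hcR _)
    · have hpe := hci e
      have h1 : a.val.tail = b.val.tail :=
        congrArg (fun p : List.Vector (Fin q) (h - 1) × Fin q => p.1.val) hpe
      have h2 : ∀ pa pb, a.val.head pa = b.val.head pb := by
        intro pa pb
        exact congrArg Prod.snd hpe
      have hane : a.val ≠ [] := fun e' => ha (by rw [e']; exact Nat.zero_le _)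
      have hbne : b.val ≠ [] := fun e' => hb (by rw [e']; exact Nat.zero_le _)
      apply Subtype.ext
      rw [← List.cons_head_tail hane, ← List.cons_head_tail hbne, h1, h2 hane hbne]
  · have key : ∀ a b : qaryVert q h, (∃ i : Fin q, b.val = i :: a.val) → G.Adj (g a) (g b) := by
      rintro a b ⟨i, hi⟩
      have hla : a.val.length ≤ h - 1 := by
        have := b.prop; rw [hi] at this; simp only [List.length_cons] at this; omega
      have hga : g a = f ⟨a.val, hla⟩ := hgshort a hla
      by_cases hlb : b.val.length ≤ h - 1
      · have hgb : g b = f ⟨b.val, hlb⟩ := hgshort b hlb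
        rw [hga, hgb]
        have hadj : (qaryTree q (h - 1)).Adj ⟨a.val, hla⟩ ⟨b.val, hlb⟩ := by
          refine (SimpleGraph.fromRel_adj _ _ _).mpr ⟨?_, Or.inl ⟨i, hi⟩⟩
          intro e
          have hv : a.val = b.val :=
            congrArg (fun x : qaryVert q (h - 1) => x.val) e
          rw [hi] at hv
          exact List.cons_ne_self i a.val hv.symm
        exact hf0a _ _ hadj
      · have hbne : b.val ≠ [] := by intro e'; rw [e'] at hi; cases hi
        have htl : b.val.tail.length = h - 1 := by
          have := b.prop; simp only [List.length_tail]; omega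
        have hgb : g b = c (⟨b.val.tail, htl⟩, b.val.head hbne) := dif_neg hlb
        rw [hga, hgb]
        have h2 := hcn (⟨b.val.tail, htl⟩, b.val.head hbne)
        have h3 : f ⟨b.val.tail, le_of_eq htl⟩ = f ⟨a.val, hla⟩ :=
          congrArg f (Subtype.ext (by show b.val.tail = a.val; rw [hi, List.tail_cons]))
        rw [h3] at h2
        exact h2
    intro a b hab
    rcases ((SimpleGraph.fromRel_adj _ _ _).mp hab).2 with hr | hr
    · exact key a b hr
    · exact (key b a hr).symm
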